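/- Let (y_t)_{t∈ℤ} be covariance-stationary white noise with variance σ² > 0, and for integers m ≥ 1 and 0 ≤ n ≤ 2^m − 1 define the MODWPT component W_{m,n,t} = ∑_{l∈ℤ} v_{m,n,l} y_{t−l} (a finite sum of square-integrable random variables). Then for every m ≥ 1, every 0 ≤ n ≤ 2^m − 1 and every t ∈ ℤ, the wavelet variance ratio satisfies Var(W_{m,n,t}) / Var(y_t) = 1/2^m. -/

import Mathlib

open MeasureTheory ProbabilityTheory Filter

/-- Filter selector `u_n`: equals `g` if `n mod 4 ∈ {0,3}` and `h` if `n mod 4 ∈ {1,2}`. -/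
noncomputable def uF (g h : ℤ → ℝ) (n : ℕ) : ℤ → ℝ :=
  fun l => if n % 4 = 0 ∨ n % 4 = 3 then g l else h l

/-- MODWPT wavelet packet filters `v_{m,n}`, defined recursively by `v_{1,0} = g`,
`v_{1,1} = h`, and `v_{m,n,l} = ∑_k u_{n,k} v_{m-1, ⌊n/2⌋, l - 2^(m-1) k}`. -/
noncomputable def wp (g h : ℤ → ℝ) : ℕ → ℕ → ℤ → ℝ
  | 0, _, _ => 0
  | 1, n, l => if n = 0 then g l else h l
  | (m + 2), n, l => ∑ᶠ k : ℤ, uF g h n k * wp g h (m + 1) (n / 2) (l - 2 ^ (m + 1) * k)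

open Function
open scoped ENNReal

lemma finsum_shift (f : ℤ → ℝ) (c : ℤ) : ∑ᶠ l, f (l + c) = ∑ᶠ l, f l :=
  finsum_comp_equiv (Equiv.addRight c)

lemma finsum_reflect (f : ℤ → ℝ) (c : ℤ) : ∑ᶠ l, f (c - l) = ∑ᶠ l, f l :=
  finsum_comp_equiv (Equiv.subLeft c)

lemma neg_one_zpow_mul (a b : ℤ) (hab : Even (a + b)) :
    (-1 : ℝ) ^ a * (-1 : ℝ) ^ b = 1 := by
  rw [← zpow_add₀ (by norm_num : (-1:ℝ) ≠ 0)]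
  exact Even.neg_one_zpow hab

section filt
variable (L : ℕ) (h g : ℤ → ℝ)
  (hLpos : 0 < L)
  (hsupp : ∀ l : ℤ, (l < 0 ∨ (L : ℤ) ≤ l) → h l = 0)
  (hnorm : ∑ᶠ l : ℤ, (h l) ^ 2 = 1 / 2)
  (horth : ∀ k : ℤ, k ≠ 0 → ∑ᶠ l : ℤ, h l * h (l + 2 * k) = 0)
  (hgdef : ∀ l : ℤ, g l = (-1 : ℝ) ^ (l + 1) * h ((L : ℤ) - 1 - l))

include hsupp hgdef in
lemma gsupp : ∀ l : ℤ, (l < 0 ∨ (L : ℤ) ≤ l) → g l = 0 := by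
  intro l hl
  rw [hgdef l]
  rw [hsupp ((L:ℤ) - 1 - l) (by omega), mul_zero]

include hnorm horth in
lemma hprop : ∀ j : ℤ, ∑ᶠ l, h l * h (l + 2 * j) = if j = 0 then 1/2 else 0 := by
  intro j
  by_cases hj : j = 0
  · subst hj; simp only [mul_zero, add_zero, if_pos rfl]
    rw [← hnorm]; congr 1; ext l; ring
  · rw [if_neg hj]; exact horth j hj

include hnorm horth hgdef in
lemma gprop : ∀ j : ℤ, ∑ᶠ l, g l * g (l + 2 * j) = if j = 0 then 1/2 else 0 := by
  intro j
  have key : ∀ l : ℤ, g l * g (l + 2 * j)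
      = h ((L:ℤ) - 1 - 2*j - l) * h (((L:ℤ) - 1 - 2*j - l) + 2 * j) := by
    intro l
    rw [hgdef l, hgdef (l + 2*j)]
    have : (-1:ℝ) ^ (l+1) * h ((L:ℤ) - 1 - l) * ((-1:ℝ) ^ (l + 2*j + 1) * h ((L:ℤ)-1-(l+2*j)))
        = ((-1:ℝ) ^ (l+1) * (-1:ℝ) ^ (l + 2*j + 1)) * (h ((L:ℤ) - 1 - l) * h ((L:ℤ)-1-(l+2*j))) := by
      ring
    rw [this, neg_one_zpow_mul _ _ ⟨l + j + 1, by ring⟩, one_mul]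
    have e1 : (L:ℤ) - 1 - 2*j - l + 2*j = (L:ℤ) - 1 - l := by ring
    have e2 : (L:ℤ) - 1 - (l + 2*j) = (L:ℤ) - 1 - 2*j - l := by ring
    rw [e1, e2]; ring
  calc ∑ᶠ l, g l * g (l + 2 * j)
      = ∑ᶠ l, (fun x => h x * h (x + 2*j)) ((L:ℤ) - 1 - 2*j - l) := by
        exact finsum_congr fun l => key l
    _ = ∑ᶠ l, h l * h (l + 2 * j) := finsum_reflect (fun x => h x * h (x + 2*j)) ((L:ℤ) - 1 - 2*j)
    _ = if j = 0 then 1/2 else 0 := hprop h hnorm horth j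

include hsupp hnorm horth hgdef in
lemma uprop (n : ℕ) : ∀ j : ℤ, ∑ᶠ l, uF g h n l * uF g h n (l + 2 * j)
    = if j = 0 then 1/2 else 0 := by
  intro j
  simp only [uF]
  by_cases hc : n % 4 = 0 ∨ n % 4 = 3
  · simp only [if_pos hc]; exact gprop L h g hnorm horth hgdef j
  · simp only [if_neg hc]; exact hprop h hnorm horth j

include hsupp hgdef in
lemma usupp (n : ℕ) : ∀ l : ℤ, (l < 0 ∨ (L : ℤ) ≤ l) → uF g h n l = 0 := by
  intro l hl
  unfold uF
  split_ifs with hc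
  · exact gsupp L h g hsupp hgdef l hl
  · exact hsupp l hl



include hsupp hgdef in
lemma wp_supp : ∀ m n (l : ℤ), (l < 0 ∨ (2^m * L : ℤ) ≤ l) → wp g h m n l = 0 := by
  intro m
  induction m using Nat.strong_induction_on with
  | _ m ih =>
    match m with
    | 0 => intro n l _; simp [wp]
    | 1 =>
      intro n l hl
      simp only [wp]
      split_ifs
      · exact gsupp L h g hsupp hgdef l (by omega)
      · exact hsupp l (by omega)
    | (m + 2) =>
      intro n l hl
      simp only [wp]
      apply finsum_eq_zero_of_forall_eq_zero
      intro k
      by_cases hk : k < 0 ∨ (L : ℤ) ≤ k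
      · rw [usupp L h g hsupp hgdef n k hk, zero_mul]
      · push_neg at hk
        have hkl : 0 ≤ k ∧ k ≤ (L:ℤ) - 1 := ⟨hk.1, by omega⟩
        have hc : (0:ℤ) < 2 ^ (m+1) := by positivity
        have h2 : (2:ℤ) ^ (m+2) = 2 * 2 ^ (m+1) := by ring
        rw [ih (m+1) (by omega) (n/2) (l - 2^(m+1)*k) ?_, mul_zero]
        rcases hl with hl | hl
        · left; nlinarith [hkl.1, hkl.2, hc]
        · right; rw [h2] at hl; nlinarith [hkl.1, hkl.2, hc]

include hsupp hgdef in
lemma wp_fin (m n : ℕ) : (support (wp g h m n)).Finite := by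
  apply Set.Finite.subset (Finset.finite_toSet (Finset.Icc (0:ℤ) (2^m * L)))
  intro l hl
  simp only [Finset.coe_Icc, Set.mem_Icc]
  by_contra hcon
  exact hl (wp_supp L h g hsupp hgdef m n l (by push_neg at hcon; omega))

lemma supp_shift (f : ℤ → ℝ) (hf : (support f).Finite) (c : ℤ) :
    (support fun l => f (l - c)).Finite := by
  have : (support fun l => f (l - c)) = (fun l => l - c) ⁻¹' support f := rfl
  rw [this]
  exact hf.preimage (fun a _ b _ hab => by omega)

include hsupp hnorm horth hgdef in
lemma wp_ONS : ∀ m n (j : ℤ),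
    ∑ᶠ l, wp g h (m+1) n l * wp g h (m+1) n (l + 2^(m+1) * j)
      = if j = 0 then (1/2 : ℝ)^(m+1) else 0 := by
  intro m
  induction m with
  | zero =>
    intro n j
    by_cases hn : n = 0
    · simpa [wp, hn] using gprop L h g hnorm horth hgdef j
    · simpa [wp, hn] using hprop h hnorm horth j
  | succ m ih =>
    intro n j
    set D : ℤ := 2^(m+1+1) * j with hDdef
    set c : ℤ := 2^(m+1) with hcdef
    set v : ℤ → ℝ := wp g h (m+1) (n/2) with hvdef
    set u : ℤ → ℝ := uF g h n with hudef
    set K : Finset ℤ := Finset.Icc (0:ℤ) ((L:ℤ)-1) with hKdef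
    have husupp : ∀ l : ℤ, l ∉ K → u l = 0 := by
      intro l hl
      apply usupp L h g hsupp hgdef n
      simp only [hKdef, Finset.mem_Icc] at hl
      omega
    have hvfin : (support v).Finite := wp_fin L h g hsupp hgdef _ _
    have hwp : ∀ l : ℤ, wp g h (m+1+1) n l = ∑ k ∈ K, u k * v (l - c*k) := by
      intro l
      show (∑ᶠ k : ℤ, u k * v (l - c * k)) = _
      apply finsum_eq_finset_sum_of_support_subset
      intro k hk
      by_contra hcon
      exact hk (show u k * v (l - c*k) = 0 by rw [husupp k (by simpa using hcon)]; simp)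
    have hfinprod : ∀ k k' : ℤ,
        (support fun l => v (l - c*k) * v (l + D - c*k')).Finite := by
      intro k k'
      apply (supp_shift v hvfin (c*k)).subset
      intro l hl
      simp only [mem_support] at hl ⊢
      intro h0
      exact hl (by rw [h0]; ring)
    have hfin2 : ∀ k k' : ℤ,
        (support fun l => (u k * v (l - c*k)) * (u k' * v (l + D - c*k'))).Finite := by
      intro k k'
      apply (supp_shift v hvfin (c*k)).subset
      intro l hl
      simp only [mem_support] at hl ⊢
      intro h0
      exact hl (by rw [h0]; ring)
    have hfin1 : ∀ k : ℤ,
        (support fun l => ∑ k' ∈ K, (u k * v (l - c*k)) * (u k' * v (l + D - c*k'))).Finite := by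
      intro k
      apply (supp_shift v hvfin (c*k)).subset
      intro l hl
      simp only [mem_support] at hl ⊢
      intro h0
      apply hl
      apply Finset.sum_eq_zero
      intro k' _
      rw [h0]
      ring
    have hinner : ∀ k k' : ℤ,
        (∑ᶠ l, (u k * v (l - c*k)) * (u k' * v (l + D - c*k')))
          = u k * u (k + 2*j) * (if k' = k + 2*j then (1/2:ℝ)^(m+1) else 0) := by
      intro k k'
      have step1 : (∑ᶠ l, (u k * v (l - c*k)) * (u k' * v (l + D - c*k')))
          = (u k * u k') * ∑ᶠ l, v (l - c*k) * v (l + D - c*k') := by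
        rw [mul_finsum _ _]
        apply finsum_congr
        intro l
        ring
      have step2 : (∑ᶠ l, v (l - c*k) * v (l + D - c*k'))
          = ∑ᶠ l, v l * v (l + c * (k + 2*j - k')) := by
        rw [← finsum_shift (fun l => v (l - c*k) * v (l + D - c*k')) (c*k)]
        apply finsum_congr
        intro l
        have e1 : l + c*k - c*k = l := by ring
        have e2 : l + c*k + D - c*k' = l + c * (k + 2*j - k') := by
          simp only [hDdef, hcdef]; ring
        rw [e1, e2]
      have step3 : (∑ᶠ l, v l * v (l + c * (k + 2*j - k')))
          = if k + 2*j - k' = 0 then (1/2:ℝ)^(m+1) else 0 := by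
        simpa only [hcdef, hvdef] using ih (n/2) (k + 2*j - k')
      rw [step1, step2, step3]
      by_cases hk' : k' = k + 2*j
      · rw [if_pos (by omega), if_pos hk', hk']
      · rw [if_neg (by omega), if_neg hk', mul_zero, mul_zero]
    calc ∑ᶠ l, wp g h (m+1+1) n l * wp g h (m+1+1) n (l + D)
        = ∑ᶠ l, ∑ k ∈ K, ∑ k' ∈ K, (u k * v (l - c*k)) * (u k' * v (l + D - c*k')) := by
          apply finsum_congr
          intro l
          rw [hwp l, hwp (l + D), Finset.sum_mul_sum]
      _ = ∑ k ∈ K, ∑ᶠ l, ∑ k' ∈ K, (u k * v (l - c*k)) * (u k' * v (l + D - c*k')) :=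
          finsum_sum_comm K _ (fun k _ => hfin1 k)
      _ = ∑ k ∈ K, ∑ k' ∈ K, ∑ᶠ l, (u k * v (l - c*k)) * (u k' * v (l + D - c*k')) :=
          Finset.sum_congr rfl (fun k _ => finsum_sum_comm K _ (fun k' _ => hfin2 k k'))
      _ = ∑ k ∈ K, ∑ k' ∈ K, u k * u (k + 2*j) * (if k' = k + 2*j then (1/2:ℝ)^(m+1) else 0) :=
          Finset.sum_congr rfl (fun k _ => Finset.sum_congr rfl (fun k' _ => hinner k k'))
      _ = ∑ k ∈ K, u k * u (k + 2*j) * (1/2:ℝ)^(m+1) := by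
          apply Finset.sum_congr rfl
          intro k _
          rw [← Finset.mul_sum, Finset.sum_ite_eq' K (k + 2*j) (fun _ => (1/2:ℝ)^(m+1))]
          by_cases hmem : k + 2*j ∈ K
          · rw [if_pos hmem]
          · rw [if_neg hmem, husupp _ hmem]; ring
      _ = (∑ k ∈ K, u k * u (k + 2*j)) * (1/2:ℝ)^(m+1) := by
          rw [Finset.sum_mul]
      _ = (∑ᶠ k, u k * u (k + 2*j)) * (1/2:ℝ)^(m+1) := by
          congr 1
          symm
          apply finsum_eq_finset_sum_of_support_subset
          intro k hk
          by_contra hcon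
          exact hk (show u k * u (k + 2*j) = 0 by rw [husupp k (by simpa using hcon)]; simp)
      _ = (if j = 0 then (1/2:ℝ) else 0) * (1/2:ℝ)^(m+1) := by
          rw [uprop L h g hsupp hnorm horth hgdef n j]
      _ = if j = 0 then (1/2 : ℝ)^(m+1+1) else 0 := by
          by_cases hj : j = 0
          · rw [if_pos hj, if_pos hj]; ring
          · rw [if_neg hj, if_neg hj, zero_mul]

end filt

/-- For covariance-stationary white noise `y` with variance `σ² > 0`,
the MODWPT-based wavelet variance ratio satisfies
`Var(W_{m,n,t}) / Var(y_t) = 1 / 2^m` for all `m ≥ 1`, `0 ≤ n ≤ 2^m - 1`, `t ∈ ℤ`. -/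
theorem stmt0 (Ω : Type) [MeasureSpace Ω] [IsProbabilityMeasure (ℙ : Measure Ω)]
    (y : ℤ → Ω → ℝ) (σ2 : ℝ) (hσ : 0 < σ2)
    (hL2 : ∀ t : ℤ, MemLp (y t) 2)
    (hmean : ∀ t : ℤ, ∫ ω, y t ω = 0)
    (hvar : ∀ t : ℤ, ∫ ω, (y t ω) ^ 2 = σ2)
    (huncorr : ∀ s t : ℤ, s ≠ t → ∫ ω, y s ω * y t ω = 0)
    (L : ℕ) (hLpos : 0 < L) (hLeven : Even L)
    (h : ℤ → ℝ)
    (hsupp : ∀ l : ℤ, (l < 0 ∨ (L : ℤ) ≤ l) → h l = 0)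
    (hsum0 : ∑ᶠ l : ℤ, h l = 0)
    (hnorm : ∑ᶠ l : ℤ, (h l) ^ 2 = 1 / 2)
    (horth : ∀ k : ℤ, k ≠ 0 → ∑ᶠ l : ℤ, h l * h (l + 2 * k) = 0)
    (g : ℤ → ℝ) (hgdef : ∀ l : ℤ, g l = (-1 : ℝ) ^ (l + 1) * h ((L : ℤ) - 1 - l))
    (m : ℕ) (hm : 1 ≤ m) (n : ℕ) (hn : n ≤ 2 ^ m - 1) (t : ℤ) :
    variance (fun ω => ∑ᶠ l : ℤ, wp g h m n l * y (t - l) ω) ℙ / variance (y t) ℙ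
      = 1 / 2 ^ m := by
  obtain ⟨m', rfl⟩ : ∃ m', m = m' + 1 := ⟨m - 1, by omega⟩
  set cc : ℤ → ℝ := wp g h (m'+1) n with hccdef
  set S : Finset ℤ := Finset.Icc (0:ℤ) (2^(m'+1) * L) with hSdef
  have hcS : ∀ l : ℤ, l ∉ S → cc l = 0 := by
    intro l hl
    apply wp_supp L h g hsupp hgdef (m'+1) n
    simp only [hSdef, Finset.mem_Icc] at hl
    omega
  -- sum of squares of the filter
  have hsqS : ∑ l ∈ S, (cc l)^2 = (1/2:ℝ)^(m'+1) := by
    have h0 := wp_ONS L h g hsupp hnorm horth hgdef m' n 0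
    rw [← hccdef] at h0
    simp only [mul_zero, add_zero, eq_self_iff_true, if_true] at h0
    calc ∑ l ∈ S, (cc l)^2 = ∑ l ∈ S, cc l * cc l := by
          apply Finset.sum_congr rfl; intro l _; ring
      _ = ∑ᶠ l, cc l * cc l := by
          symm
          apply finsum_eq_finset_sum_of_support_subset
          intro l hl
          by_contra hcon
          exact hl (show cc l * cc l = 0 by rw [hcS l (by simpa using hcon)]; ring)
      _ = (1/2:ℝ)^(m'+1) := h0
  -- rewrite the random variable as a finite sum
  have hfun : (fun ω => ∑ᶠ l : ℤ, cc l * y (t - l) ω)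
      = fun ω => ∑ l ∈ S, cc l * y (t - l) ω := by
    funext ω
    apply finsum_eq_finset_sum_of_support_subset
    intro l hl
    by_contra hcon
    exact hl (show cc l * y (t-l) ω = 0 by rw [hcS l (by simpa using hcon)]; ring)
  have hW2 : MemLp (fun ω => ∑ l ∈ S, cc l * y (t - l) ω) 2 :=
    memLp_finset_sum S (fun l _ => (hL2 (t - l)).const_mul (cc l))
  have hInt : ∀ s : ℤ, Integrable (y s) :=
    fun s => (hL2 s).integrable (by norm_num : (1:ℝ≥0∞) ≤ 2)
  have hIntMul : ∀ s s' : ℤ, Integrable (fun ω => y s ω * y s' ω) := by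
    intro s s'
    have h1 : (1:ℝ≥0∞)/1 = 1/2 + 1/2 := by
      rw [ENNReal.div_add_div_same, one_add_one_eq_two, div_one]
      exact (ENNReal.div_self two_ne_zero ENNReal.ofNat_ne_top).symm
    have := ((hL2 s').smul (hL2 s) (r := 1)).integrable le_rfl
    exact this
  have hcov : ∀ s s' : ℤ, ∫ ω, y s ω * y s' ω = if s = s' then σ2 else 0 := by
    intro s s'
    by_cases hss : s = s'
    · subst hss
      rw [if_pos rfl, ← hvar s]
      congr 1
      funext ω
      ring
    · rw [if_neg hss]
      exact huncorr s s' hss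
  have hEW : ∫ ω, (∑ l ∈ S, cc l * y (t - l) ω) = 0 := by
    rw [integral_finset_sum S (fun l _ => ((hInt (t - l)).const_mul (cc l)))]
    apply Finset.sum_eq_zero
    intro l _
    rw [integral_const_mul, hmean (t - l), mul_zero]
  have hEW2 : ∫ ω, (∑ l ∈ S, cc l * y (t - l) ω)^2 = σ2 * (1/2:ℝ)^(m'+1) := by
    have expand : (fun ω => (∑ l ∈ S, cc l * y (t - l) ω)^2)
        = fun ω => ∑ l ∈ S, ∑ l' ∈ S, (cc l * cc l') * (y (t-l) ω * y (t-l') ω) := by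
      funext ω
      rw [sq, Finset.sum_mul_sum]
      apply Finset.sum_congr rfl; intro l _
      apply Finset.sum_congr rfl; intro l' _
      ring
    rw [expand]
    rw [integral_finset_sum S (fun l _ => integrable_finset_sum S
      (fun l' _ => (hIntMul (t-l) (t-l')).const_mul _))]
    have inner : ∀ l ∈ S, (∫ ω, ∑ l' ∈ S, (cc l * cc l') * (y (t-l) ω * y (t-l') ω))
        = (cc l)^2 * σ2 := by
      intro l hl
      rw [integral_finset_sum S (fun l' _ => (hIntMul (t-l) (t-l')).const_mul _)]
      have term : ∀ l' ∈ S, (∫ ω, (cc l * cc l') * (y (t-l) ω * y (t-l') ω))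
          = if l' = l then cc l * cc l' * σ2 else 0 := by
        intro l' _
        rw [integral_const_mul, hcov (t-l) (t-l')]
        by_cases hll : l' = l
        · rw [if_pos (by omega), if_pos hll]
        · rw [if_neg (by omega), if_neg hll, mul_zero]
      rw [Finset.sum_congr rfl term, Finset.sum_ite_eq' S l (fun l' => cc l * cc l' * σ2),
        if_pos hl]
      ring
    rw [Finset.sum_congr rfl inner, ← Finset.sum_mul, hsqS]
    ring
  have hVarY : variance (y t) ℙ = σ2 := by
    rw [variance_eq_sub (hL2 t)]
    simp only [Pi.pow_apply]
    rw [hvar t, hmean t]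
    ring
  have hVarW : variance (fun ω => ∑ᶠ l : ℤ, cc l * y (t - l) ω) ℙ
      = σ2 * (1/2:ℝ)^(m'+1) := by
    rw [hfun, variance_eq_sub hW2]
    simp only [Pi.pow_apply]
    rw [hEW2, hEW]
    ring
  rw [hVarW, hVarY, mul_comm, mul_div_assoc, div_self (ne_of_gt hσ), mul_one,
    div_pow, one_pow]
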